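/- For θ ∈ [0,π], the quaternionic matrix g = diag(-(e^{-2iθ})j, j) satisfies g·A·g⁻¹ = A⁻¹, where A = [[e^{iθ}, 1],[0, e^{iθ}]]. Hence the parabolic representative A is reversible in SL(2,ℍ). -/

import Mathlib

/-- The quaternion `cos θ + (sin θ) i`, i.e. `e^{iθ}` inside the quaternions. -/
noncomputable def eI (θ : ℝ) : Quaternion ℝ := ⟨Real.cos θ, Real.sin θ, 0, 0⟩

/-- The quaternion unit `j`. -/
def qj : Quaternion ℝ := ⟨0, 0, 1, 0⟩

/-- The standard complex embedding `Φ` of a 2×2 quaternionic matrix `A = A₁ + A₂ j`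
as the 4×4 complex block matrix `[[A₁, A₂], [-conj A₂, conj A₁]]`. -/
noncomputable def Phi (A : Matrix (Fin 2) (Fin 2) (Quaternion ℝ)) :
    Matrix (Fin 2 ⊕ Fin 2) (Fin 2 ⊕ Fin 2) ℂ :=
  Matrix.fromBlocks
    (A.map fun q => (⟨q.re, q.imI⟩ : ℂ))
    (A.map fun q => (⟨q.imJ, q.imK⟩ : ℂ))
    (-(A.map fun q => (⟨q.imJ, -q.imK⟩ : ℂ)))
    (A.map fun q => (⟨q.re, -q.imI⟩ : ℂ))

/-- The quaternionic determinant: the determinant of the complex embedding. -/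
noncomputable def detH (A : Matrix (Fin 2) (Fin 2) (Quaternion ℝ)) : ℂ := (Phi A).det

/-- g = diag(-(e^{-2iθ})j, j) conjugates the parabolic A = [[e^{iθ},1],[0,e^{iθ}]] to
A⁻¹ = [[e^{-iθ}, -e^{-2iθ}],[0,e^{-iθ}]] (here g² = -1, so g⁻¹ = -g): A is reversible. -/
lemma eI_mul (a b : ℝ) : eI a * eI b = eI (a+b) := by
  ext <;> simp only [Quaternion.re_mul, Quaternion.imI_mul, Quaternion.imJ_mul, Quaternion.imK_mul] <;> simp [eI, Real.cos_add, Real.sin_add] <;> ring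
lemma eI_zero : eI 0 = 1 := by ext <;> simp [eI, Quaternion.re_one, Quaternion.imI_one, Quaternion.imJ_one, Quaternion.imK_one]
lemma qj_mul_eI (a : ℝ) : qj * eI a = eI (-a) * qj := by
  ext <;> simp only [Quaternion.re_mul, Quaternion.imI_mul, Quaternion.imJ_mul, Quaternion.imK_mul] <;> simp [eI, qj]
lemma qj_sq : qj * qj = -1 := by
  ext <;> simp only [Quaternion.re_mul, Quaternion.imI_mul, Quaternion.imJ_mul, Quaternion.imK_mul] <;> simp [qj, Quaternion.re_one, Quaternion.imI_one, Quaternion.imJ_one, Quaternion.imK_one]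
lemma key (a b : ℝ) : (eI a * qj) * (eI b * qj) = -(eI (a - b)) := by
  rw [mul_assoc, ← mul_assoc qj, qj_mul_eI, mul_assoc, qj_sq, mul_neg_one, mul_neg,
      eI_mul, show a + -b = a - b from by ring]
lemma negM (a b c d : Quaternion ℝ) : -(!![a,b;c,d]) = !![-a,-b;-c,-d] := by
  refine Matrix.ext fun i j => ?_
  fin_cases i <;> fin_cases j <;> simp


theorem parabolic_reversible (θ : ℝ) (hθ : θ ∈ Set.Icc 0 Real.pi) :
    !![eI θ, 1; 0, eI θ] * !![eI (-θ), -(eI (-(2*θ))); 0, eI (-θ)] = 1 ∧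
      !![eI (-θ), -(eI (-(2*θ))); 0, eI (-θ)] * !![eI θ, 1; 0, eI θ] = 1 ∧
      !![-(eI (-(2*θ)) * qj), 0; 0, qj] * !![-(eI (-(2*θ)) * qj), 0; 0, qj] = -1 ∧
      !![-(eI (-(2*θ)) * qj), 0; 0, qj] * !![eI θ, 1; 0, eI θ] *
          (-(!![-(eI (-(2*θ)) * qj), 0; 0, qj])) =
        !![eI (-θ), -(eI (-(2*θ))); 0, eI (-θ)] := by
  have h1 : eI θ * eI (-θ) = 1 := by rw [eI_mul, show θ + -θ = 0 by ring, eI_zero]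
  have h2 : eI (-θ) * eI θ = 1 := by rw [eI_mul, show -θ + θ = 0 by ring, eI_zero]
  have h3 : eI θ * eI (-(2*θ)) = eI (-θ) := by rw [eI_mul, show θ + -(2*θ) = -θ by ring]
  have h4 : eI (-(2*θ)) * eI θ = eI (-θ) := by rw [eI_mul, show -(2*θ) + θ = -θ by ring]
  have hgg : (eI (-(2*θ)) * qj) * (eI (-(2*θ)) * qj) = -1 := by
    rw [key, sub_self, eI_zero]
  have E00 : eI (-(2*θ)) * qj * eI θ * (eI (-(2*θ)) * qj) = -(eI (-θ)) := by
    have h5 : (eI (-(2*θ)) * qj) * eI θ = eI (-(3*θ)) * qj := by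
      rw [mul_assoc, qj_mul_eI, ← mul_assoc, eI_mul, show -(2*θ) + -θ = -(3*θ) by ring]
    rw [h5, key, show -(3*θ) - -(2*θ) = -θ by ring]
  have E01 : -(eI (-(2*θ)) * qj) * -qj = -(eI (-(2*θ))) := by
    rw [neg_mul_neg, mul_assoc, qj_sq, mul_neg_one]
  have E11 : qj * eI θ * -qj = eI (-θ) := by
    rw [qj_mul_eI, mul_assoc, mul_neg, qj_sq, mul_neg, mul_neg_one, neg_neg]
  refine ⟨?_, ?_, ?_, ?_⟩
  · rw [Matrix.mul_fin_two, Matrix.one_fin_two]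
    simp [h1, h3]
  · rw [Matrix.mul_fin_two, Matrix.one_fin_two]
    simp [h2, h4]
  · have hneg : (-1 : Matrix (Fin 2) (Fin 2) (Quaternion ℝ)) = !![-1,0;0,-1] := by
      rw [Matrix.one_fin_two, negM, neg_zero]
    rw [Matrix.mul_fin_two, hneg]
    simp [neg_mul_neg, hgg, qj_sq]
  · rw [Matrix.mul_fin_two, negM, Matrix.mul_fin_two]
    simp [E00, E01, E11, neg_neg]
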